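/- arXiv:1506.08897 — 2 statements merged into one kernel-verified Lean document; each statement's English description precedes it below -/
import Mathlib

section
/- Let F be a field, let D be an associative F-algebra, and let τ : D → F be an additive map satisfying τ(xy) = τ(yx) for all x, y ∈ D. Let m ≥ 2, let Y = Σ_{i=1}^{m-1} E_{i,i+1} ∈ M_m(D), define Tr_τ(M) = τ(Σ_i M_{i,i}) and B_Y(A,B) = Tr_τ(Y(AB − BA)), and let c = {C ∈ M_m(D) : C_{i,m} = 0 for all i}. Then for all A, B ∈ c one has the identity B_Y(A,B) = Σ_{i=2}^{m-1} Σ_{k=1}^{m-1} τ(A_{i,k}(B_{k,i-1} − B_{k+1,i})) + Σ_{k=1}^{m-1} τ(A_{m,k} B_{k,m-1}) − Σ_{k=1}^{m-1} τ(A_{1,k} B_{k+1,1}). -/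
def extM {D : Type*} [Zero D] {m : ℕ} (M : Matrix (Fin m) (Fin m) D) : ℕ → ℕ → D :=
  fun i j => if h : i < m ∧ j < m then M ⟨i, h.1⟩ ⟨j, h.2⟩ else 0

lemma extM_eq {D : Type*} [Zero D] {m : ℕ} (M : Matrix (Fin m) (Fin m) D)
    {i j : ℕ} (hi : i < m) (hj : j < m) :
    M ⟨i, hi⟩ ⟨j, hj⟩ = extM M i j := by
  unfold extM
  rw [dif_pos (⟨hi, hj⟩ : i < m ∧ j < m)]

lemma extM_apply {D : Type*} [Zero D] {m : ℕ} (M : Matrix (Fin m) (Fin m) D)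
    (i j : Fin m) : M i j = extM M i.1 j.1 := by
  unfold extM
  rw [dif_pos (⟨i.isLt, j.isLt⟩ : (i:ℕ) < m ∧ (j:ℕ) < m)]

/-- With `τ : D → F` additive satisfying `τ(xy) = τ(yx)`,
`m ≥ 2`, `Y = Σ_{i=1}^{m-1} E_{i,i+1}`, `B_Y(A,B) = Tr_τ(Y(AB - BA))` and
`c` the matrices with vanishing last column, for all `A, B ∈ c` one has
`B_Y(A,B) = Σ_{i=2}^{m-1} Σ_{k=1}^{m-1} τ(A_{i,k}(B_{k,i-1} − B_{k+1,i}))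
  + Σ_{k=1}^{m-1} τ(A_{m,k} B_{k,m-1}) − Σ_{k=1}^{m-1} τ(A_{1,k} B_{k+1,1})`
(the sums below are written with 0-based indices). -/
theorem generalized_local_coefficients_stmt6
    {F D : Type*} [Field F] [Ring D] [Algebra F D]
    (m : ℕ) (hm : 2 ≤ m)
    (τ : D →+ F) (hτ : ∀ x y : D, τ (x * y) = τ (y * x))
    (Y : Matrix (Fin m) (Fin m) D)
    (hY : ∀ i j : Fin m, Y i j = if (i : ℕ) + 1 = (j : ℕ) then 1 else 0)
    (A B : Matrix (Fin m) (Fin m) D)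
    (hA : ∀ i : Fin m, A i ⟨m - 1, by omega⟩ = 0)
    (hB : ∀ i : Fin m, B i ⟨m - 1, by omega⟩ = 0) :
    τ (∑ i, (Y * (A * B - B * A)) i i) =
      (∑ i ∈ (Finset.Ico 1 (m - 1)).attach, ∑ k ∈ (Finset.range (m - 1)).attach,
        τ (A ⟨i.1, by have := Finset.mem_Ico.mp i.2; omega⟩
             ⟨k.1, by have := Finset.mem_range.mp k.2; omega⟩ *
           (B ⟨k.1, by have := Finset.mem_range.mp k.2; omega⟩
              ⟨i.1 - 1, by have := Finset.mem_Ico.mp i.2; omega⟩ -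
            B ⟨k.1 + 1, by have := Finset.mem_range.mp k.2; omega⟩
              ⟨i.1, by have := Finset.mem_Ico.mp i.2; omega⟩)))
      + (∑ k ∈ (Finset.range (m - 1)).attach,
          τ (A ⟨m - 1, by omega⟩ ⟨k.1, by have := Finset.mem_range.mp k.2; omega⟩ *
             B ⟨k.1, by have := Finset.mem_range.mp k.2; omega⟩ ⟨m - 2, by omega⟩))
      - (∑ k ∈ (Finset.range (m - 1)).attach,
          τ (A ⟨0, by omega⟩ ⟨k.1, by have := Finset.mem_range.mp k.2; omega⟩ *
             B ⟨k.1 + 1, by have := Finset.mem_range.mp k.2; omega⟩ ⟨0, by omega⟩)) := by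
  have hm1 : m - 1 < m := by omega
  -- vanishing last columns, in extM form
  have hAe : ∀ i : ℕ, extM A i (m-1) = 0 := by
    intro i
    unfold extM
    split
    · next h => exact hA ⟨i, h.1⟩
    · rfl
  have hBe : ∀ i : ℕ, extM B i (m-1) = 0 := by
    intro i
    unfold extM
    split
    · next h => exact hB ⟨i, h.1⟩
    · rfl
  -- Step 1: the trace as a sum of subdiagonal entries
  have hTr : (∑ i, (Y * (A * B - B * A)) i i)
      = ∑ i ∈ Finset.range (m-1), extM (A * B - B * A) (i+1) i := by
    have h1 : ∀ i : Fin m, (Y * (A * B - B * A)) i i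
        = ∑ j ∈ Finset.range m, (if (i:ℕ)+1 = j then extM (A * B - B * A) j i.1 else 0) := by
      intro i
      rw [Matrix.mul_apply,
        ← Fin.sum_univ_eq_sum_range (fun j => if (i:ℕ)+1 = j then extM (A * B - B * A) j i.1 else 0) m]
      apply Finset.sum_congr rfl
      intro j _
      rw [hY, extM_apply (A * B - B * A) j i, ite_mul, one_mul, zero_mul]
    simp only [h1, Finset.sum_ite_eq]
    rw [Fin.sum_univ_eq_sum_range
      (fun i => if i+1 ∈ Finset.range m then extM (A * B - B * A) (i+1) i else 0) m]
    rw [← Finset.sum_subset (Finset.range_subset_range.mpr (by omega : m-1 ≤ m))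
        (fun x _ hx => by
          rw [if_neg]
          simp only [Finset.mem_range] at hx ⊢
          omega)]
    apply Finset.sum_congr rfl
    intro i hi
    rw [if_pos]
    simp only [Finset.mem_range] at hi ⊢
    omega
  -- Step 2: expand the subdiagonal entries of the commutator
  have hEnt : ∀ i ∈ Finset.range (m-1), extM (A * B - B * A) (i+1) i
      = ∑ k ∈ Finset.range m, (extM A (i+1) k * extM B k i - extM B (i+1) k * extM A k i) := by
    intro i hi
    have hi' : i < m - 1 := Finset.mem_range.mp hi
    rw [← extM_eq _ (by omega : i+1 < m) (by omega : i < m), Matrix.sub_apply,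
      Matrix.mul_apply, Matrix.mul_apply, ← Finset.sum_sub_distrib,
      ← Fin.sum_univ_eq_sum_range
        (fun k => extM A (i+1) k * extM B k i - extM B (i+1) k * extM A k i) m]
    apply Finset.sum_congr rfl
    intro k _
    rw [extM_apply A _ k, extM_apply B k _, extM_apply B _ k, extM_apply A k _]
  -- Step 3: LHS as a double ℕ-sum of τ-values
  have hLHS : τ (∑ i, (Y * (A * B - B * A)) i i)
      = (∑ i ∈ Finset.range (m-1), ∑ k ∈ Finset.range (m-1), τ (extM A (i+1) k * extM B k i))
        - (∑ i ∈ Finset.range (m-1), ∑ k ∈ Finset.range (m-1), τ (extM A k i * extM B (i+1) k)) := by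
    rw [hTr, Finset.sum_congr rfl hEnt, map_sum]
    have : ∀ i ∈ Finset.range (m-1),
        τ (∑ k ∈ Finset.range m, (extM A (i+1) k * extM B k i - extM B (i+1) k * extM A k i))
        = (∑ k ∈ Finset.range (m-1), τ (extM A (i+1) k * extM B k i))
          - (∑ k ∈ Finset.range (m-1), τ (extM A k i * extM B (i+1) k)) := by
      intro i _
      rw [map_sum]
      simp only [map_sub]
      rw [Finset.sum_sub_distrib]
      have t1 : ∑ k ∈ Finset.range (m-1), τ (extM A (i+1) k * extM B k i)
          = ∑ k ∈ Finset.range m, τ (extM A (i+1) k * extM B k i) :=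
        Finset.sum_subset (Finset.range_subset_range.mpr (by omega))
          (fun x hx hx' => by
            have hx1 : x = m-1 := by
              simp only [Finset.mem_range] at hx hx'
              omega
            subst hx1
            rw [hAe, zero_mul, map_zero])
      have t2 : ∑ k ∈ Finset.range (m-1), τ (extM B (i+1) k * extM A k i)
          = ∑ k ∈ Finset.range m, τ (extM B (i+1) k * extM A k i) :=
        Finset.sum_subset (Finset.range_subset_range.mpr (by omega))
          (fun x hx hx' => by
            have hx1 : x = m-1 := by
              simp only [Finset.mem_range] at hx hx'
              omega
            subst hx1
            rw [hBe, zero_mul, map_zero])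
      rw [← t1, ← t2]
      congr 1
      exact Finset.sum_congr rfl (fun k _ => hτ _ _)
    rw [Finset.sum_congr rfl this, Finset.sum_sub_distrib]
  rw [hLHS]
  -- Step 4: rewrite the three attached sums in extM form
  have hR1 : (∑ i ∈ (Finset.Ico 1 (m - 1)).attach, ∑ k ∈ (Finset.range (m - 1)).attach,
        τ (A ⟨i.1, by have := Finset.mem_Ico.mp i.2; omega⟩
             ⟨k.1, by have := Finset.mem_range.mp k.2; omega⟩ *
           (B ⟨k.1, by have := Finset.mem_range.mp k.2; omega⟩
              ⟨i.1 - 1, by have := Finset.mem_Ico.mp i.2; omega⟩ -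
            B ⟨k.1 + 1, by have := Finset.mem_range.mp k.2; omega⟩
              ⟨i.1, by have := Finset.mem_Ico.mp i.2; omega⟩)))
      = (∑ i ∈ Finset.Ico 1 (m-1), ∑ k ∈ Finset.range (m-1),
          τ (extM A i k * extM B k (i-1)))
        - (∑ i ∈ Finset.Ico 1 (m-1), ∑ k ∈ Finset.range (m-1),
          τ (extM A i k * extM B (k+1) i)) := by
    rw [← Finset.sum_sub_distrib]
    rw [← Finset.sum_attach (Finset.Ico 1 (m-1)) (fun i =>
      (∑ k ∈ Finset.range (m-1), τ (extM A i k * extM B k (i-1)))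
      - ∑ k ∈ Finset.range (m-1), τ (extM A i k * extM B (k+1) i))]
    apply Finset.sum_congr rfl
    intro i _
    rw [← Finset.sum_sub_distrib]
    rw [← Finset.sum_attach (Finset.range (m-1)) (fun k =>
      τ (extM A i.1 k * extM B k (i.1-1)) - τ (extM A i.1 k * extM B (k+1) i.1))]
    apply Finset.sum_congr rfl
    intro k _
    have hi := Finset.mem_Ico.mp i.2
    have hk := Finset.mem_range.mp k.2
    rw [extM_eq A (i := i.1) (j := k.1) (by omega) (by omega),
      extM_eq B (i := k.1) (j := i.1 - 1) (by omega) (by omega),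
      extM_eq B (i := k.1 + 1) (j := i.1) (by omega) (by omega),
      mul_sub, map_sub]
  have hR2 : (∑ k ∈ (Finset.range (m - 1)).attach,
          τ (A ⟨m - 1, by omega⟩ ⟨k.1, by have := Finset.mem_range.mp k.2; omega⟩ *
             B ⟨k.1, by have := Finset.mem_range.mp k.2; omega⟩ ⟨m - 2, by omega⟩))
      = ∑ k ∈ Finset.range (m-1), τ (extM A (m-1) k * extM B k (m-2)) := by
    rw [← Finset.sum_attach (Finset.range (m-1)) (fun k =>
      τ (extM A (m-1) k * extM B k (m-2)))]
    apply Finset.sum_congr rfl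
    intro k _
    have hk := Finset.mem_range.mp k.2
    rw [extM_eq A (i := m-1) (j := k.1) (by omega) (by omega),
      extM_eq B (i := k.1) (j := m-2) (by omega) (by omega)]
  have hR3 : (∑ k ∈ (Finset.range (m - 1)).attach,
          τ (A ⟨0, by omega⟩ ⟨k.1, by have := Finset.mem_range.mp k.2; omega⟩ *
             B ⟨k.1 + 1, by have := Finset.mem_range.mp k.2; omega⟩ ⟨0, by omega⟩))
      = ∑ k ∈ Finset.range (m-1), τ (extM A 0 k * extM B (k+1) 0) := by
    rw [← Finset.sum_attach (Finset.range (m-1)) (fun k =>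
      τ (extM A 0 k * extM B (k+1) 0))]
    apply Finset.sum_congr rfl
    intro k _
    have hk := Finset.mem_range.mp k.2
    rw [extM_eq A (i := 0) (j := k.1) (by omega) (by omega),
      extM_eq B (i := k.1+1) (j := 0) (by omega) (by omega)]
  rw [hR1, hR2, hR3]
  -- Step 5: index shifting on the left-hand sums
  have hS1 : (∑ i ∈ Finset.range (m-1), ∑ k ∈ Finset.range (m-1),
        τ (extM A (i+1) k * extM B k i))
      = ∑ i ∈ Finset.Ico 1 m, ∑ k ∈ Finset.range (m-1),
        τ (extM A i k * extM B k (i-1)) := by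
    rw [Finset.sum_Ico_eq_sum_range]
    apply Finset.sum_congr rfl
    intro i _
    rw [show 1 + i = i + 1 from by omega, Nat.add_sub_cancel]
  have hS2 : (∑ i ∈ Finset.range (m-1), ∑ k ∈ Finset.range (m-1),
        τ (extM A k i * extM B (i+1) k))
      = ∑ i ∈ Finset.range (m-1), ∑ k ∈ Finset.range (m-1),
        τ (extM A i k * extM B (k+1) i) := Finset.sum_comm
  have htop : (∑ i ∈ Finset.Ico 1 m, ∑ k ∈ Finset.range (m-1),
        τ (extM A i k * extM B k (i-1)))
      = (∑ i ∈ Finset.Ico 1 (m-1), ∑ k ∈ Finset.range (m-1),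
          τ (extM A i k * extM B k (i-1)))
        + ∑ k ∈ Finset.range (m-1), τ (extM A (m-1) k * extM B k (m-2)) := by
    rw [show Finset.Ico 1 m = Finset.Ico 1 ((m-1)+1) from by
      rw [Nat.sub_add_cancel (by omega)]]
    rw [Finset.sum_Ico_succ_top (by omega)]
    rw [show m-1-1 = m-2 from by omega]
  have hbot : (∑ i ∈ Finset.range (m-1), ∑ k ∈ Finset.range (m-1),
        τ (extM A i k * extM B (k+1) i))
      = (∑ k ∈ Finset.range (m-1), τ (extM A 0 k * extM B (k+1) 0))
        + ∑ i ∈ Finset.Ico 1 (m-1), ∑ k ∈ Finset.range (m-1),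
          τ (extM A i k * extM B (k+1) i) := by
    rw [Finset.range_eq_Ico]
    exact Finset.sum_eq_sum_Ico_succ_bot (by omega) _
  rw [hS1, hS2, htop, hbot]
  ring
end

section
/- Let F be a field, let O ⊆ F be a subring, let D be an associative F-algebra, and let τ : D → F be an F-linear map with τ(xy) = τ(yx) for all x, y ∈ D. Let R ⊆ D be a subring and O-submodule which is self-dual with respect to τ, i.e. for all x ∈ D: (τ(xz) ∈ O for all z ∈ R) if and only if x ∈ R. Let m ≥ 1, Y = Σ_{i=1}^{m-1} E_{i,i+1} ∈ M_m(D), Tr_τ(M) = τ(Σ_i M_{i,i}), B_Y(A,B) = Tr_τ(Y(AB − BA)), and c = {C ∈ M_m(D) : C_{i,m} = 0 for all i}. Then the lattice M_m(R) ∩ c is self-dual in c with respect to B_Y: for every B ∈ c, one has B_Y(A,B) ∈ O for all A ∈ c with all entries in R if and only if all entries of B lie in R. -/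
open Matrix

private lemma glcs7_sum_ite_succ {D : Type*} [Ring D] {m : ℕ} (n : ℕ) (f : Fin m → D) :
    (∑ k : Fin m, if n + 1 = (k : ℕ) then f k else 0) =
      if h : n + 1 < m then f ⟨n + 1, h⟩ else 0 := by
  split
  · next h =>
    rw [Finset.sum_eq_single (⟨n + 1, h⟩ : Fin m)]
    · simp
    · intro k _ hk
      rw [if_neg]
      intro he
      exact hk (Fin.ext he.symm)
    · simp
  · next h =>
    apply Finset.sum_eq_zero
    intro k _
    rw [if_neg]
    have := k.isLt
    omega

private lemma glcs7_sum_ite_pred {D : Type*} [Ring D] {m : ℕ} (r : Fin m) (f : Fin m → D) :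
    (∑ i : Fin m, if (r : ℕ) = (i : ℕ) + 1 then f i else 0) =
      if h : 1 ≤ (r : ℕ) then f ⟨(r : ℕ) - 1, by omega⟩ else 0 := by
  split
  · next h =>
    rw [Finset.sum_eq_single (⟨(r : ℕ) - 1, by omega⟩ : Fin m)]
    · rw [if_pos (by simp; omega)]
    · intro k _ hk
      rw [if_neg]
      intro he
      apply hk
      apply Fin.ext
      simp
      omega
    · simp
  · next h =>
    apply Finset.sum_eq_zero
    intro k _
    rw [if_neg]
    omega

/-- Let `O ⊆ F` be a subring of the field `F`, `D` an
associative `F`-algebra, `τ : D → F` an `F`-linear map with `τ(xy) = τ(yx)`,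
and `R ⊆ D` a subring and `O`-submodule which is self-dual with respect to `τ`.
Let `m ≥ 1`, `Y = Σ_{i=1}^{m-1} E_{i,i+1}`, `B_Y(A,B) = Tr_τ(Y(AB − BA))` and
`c` the matrices with vanishing last column. Then the lattice `M_m(R) ∩ c` is
self-dual in `c` with respect to `B_Y`. -/
theorem generalized_local_coefficients_stmt7
    {F D : Type*} [Field F] [Ring D] [Algebra F D]
    (O : Subring F) (τ : D →ₗ[F] F) (hτ : ∀ x y : D, τ (x * y) = τ (y * x))
    (R : Subring D)
    (hRmod : ∀ a : F, a ∈ O → ∀ x : D, x ∈ R → a • x ∈ R)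
    (hself : ∀ x : D, (∀ z ∈ R, τ (x * z) ∈ O) ↔ x ∈ R)
    (m : ℕ) (hm : 1 ≤ m)
    (Y : Matrix (Fin m) (Fin m) D)
    (hY : ∀ i j : Fin m, Y i j = if (i : ℕ) + 1 = (j : ℕ) then 1 else 0)
    (B : Matrix (Fin m) (Fin m) D)
    (hB : ∀ i : Fin m, B i ⟨m - 1, by omega⟩ = 0) :
    (∀ A : Matrix (Fin m) (Fin m) D,
        (∀ i : Fin m, A i ⟨m - 1, by omega⟩ = 0) → (∀ i j : Fin m, A i j ∈ R) →
          τ (∑ i, (Y * (A * B - B * A)) i i) ∈ O) ↔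
      (∀ i j : Fin m, B i j ∈ R) := by
  have memO : ∀ x ∈ R, ∀ z ∈ R, τ (x * z) ∈ O := fun x hx => (hself x).mpr hx
  constructor
  · intro h
    -- Key computation: the pairing of `B` against a standard basis matrix.
    have hcompute : ∀ (r s : Fin m) (z : D),
        (∑ i, (Y * (Matrix.single r s z * B - B * Matrix.single r s z)) i i)
          = (if h1 : 1 ≤ (r : ℕ) then z * B s ⟨(r : ℕ) - 1, by omega⟩ else 0)
            - (if h2 : (s : ℕ) + 1 < m then B ⟨(s : ℕ) + 1, h2⟩ r * z else 0) := by
      intro r s z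
      have step1 : ∀ i : Fin m,
          (Y * (Matrix.single r s z * B - B * Matrix.single r s z)) i i
            = (if (r : ℕ) = (i : ℕ) + 1 then z * B s i else 0)
              - (if i = s then
                  (if h2 : (i : ℕ) + 1 < m then B ⟨(i : ℕ) + 1, h2⟩ r * z else 0) else 0) := by
        intro i
        rw [Matrix.mul_apply]
        have : ∀ k : Fin m,
            Y i k * (Matrix.single r s z * B - B * Matrix.single r s z) k i
              = if (i : ℕ) + 1 = (k : ℕ) then
                  (Matrix.single r s z * B - B * Matrix.single r s z) k i else 0 := by
          intro k
          rw [hY]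
          split <;> simp
        rw [Finset.sum_congr rfl fun k _ => this k, glcs7_sum_ite_succ]
        by_cases hi : (i : ℕ) + 1 < m
        · rw [dif_pos hi, Matrix.sub_apply, dif_pos hi]
          congr 1
          · by_cases hr : (⟨(i : ℕ) + 1, hi⟩ : Fin m) = r
            · rw [hr, Matrix.single_mul_apply_same, if_pos]
              rw [← hr]
            · rw [Matrix.single_mul_apply_of_ne (h := hr), if_neg]
              intro he
              exact hr (Fin.ext he.symm)
          · by_cases hs : i = s
            · subst hs
              rw [if_pos rfl, Matrix.mul_single_apply_same]
            · rw [Matrix.mul_single_apply_of_ne (hbj := hs), if_neg hs]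
        · rw [dif_neg hi, if_neg (by have := r.isLt; omega)]
          by_cases hs : i = s
          · rw [if_pos hs, dif_neg hi, sub_zero]
          · rw [if_neg hs, sub_zero]
      rw [Finset.sum_congr rfl fun i _ => step1 i, Finset.sum_sub_distrib,
        glcs7_sum_ite_pred, Finset.sum_ite_eq' Finset.univ s
          (fun i => if h2 : (i : ℕ) + 1 < m then B ⟨(i : ℕ) + 1, h2⟩ r * z else 0),
        if_pos (Finset.mem_univ s)]
    -- entries of a standard basis matrix with entry in `R` lie in `R`
    have hstdR : ∀ (r s : Fin m) (z : D), z ∈ R →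
        ∀ i j : Fin m, Matrix.single r s z i j ∈ R := by
      intro r s z hz i j
      simp only [Matrix.single, of_apply]
      split
      · exact hz
      · exact zero_mem R
    have hstdcol : ∀ (r s : Fin m), (s : ℕ) + 1 < m → ∀ (z : D) (i : Fin m),
        Matrix.single r s z i ⟨m - 1, by omega⟩ = 0 := by
      intro r s hs z i
      simp only [Matrix.single, of_apply]
      rw [if_neg]
      rintro ⟨-, hc⟩
      have : (s : ℕ) = m - 1 := by rw [hc]
      omega
    -- key relation 1
    have key1 : ∀ (p q : ℕ) (hp : p + 1 < m) (hq : q + 1 < m) (z : D), z ∈ R →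
        τ (z * B ⟨p, by omega⟩ ⟨q, by omega⟩ - B ⟨p + 1, hp⟩ ⟨q + 1, hq⟩ * z) ∈ O := by
      intro p q hp hq z hz
      have hh := h (Matrix.single ⟨q + 1, hq⟩ ⟨p, by omega⟩ z)
        (hstdcol _ _ (by simp only [Fin.val_mk]; omega) z) (hstdR _ _ z hz)
      rw [hcompute] at hh
      simp only [Fin.val_mk] at hh
      rw [dif_pos (by omega), dif_pos (by omega)] at hh
      exact hh
    -- key relation 0
    have key0 : ∀ (p : ℕ) (hp : p + 1 < m) (z : D), z ∈ R →
        τ (B ⟨p + 1, hp⟩ ⟨0, by omega⟩ * z) ∈ O := by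
      intro p hp z hz
      have hh := h (Matrix.single ⟨0, by omega⟩ ⟨p, by omega⟩ z)
        (hstdcol _ _ (by simp only [Fin.val_mk]; omega) z) (hstdR _ _ z hz)
      rw [hcompute] at hh
      simp only [Fin.val_mk] at hh
      rw [dif_neg (by omega), dif_pos (by omega), zero_sub, map_neg] at hh
      simpa using O.neg_mem hh
    -- from b ∈ R deduce c ∈ R (moving up the antidiagonal)
    have stepup : ∀ (p q : ℕ) (hp : p + 1 < m) (hq : q + 1 < m),
        B ⟨p, by omega⟩ ⟨q, by omega⟩ ∈ R → B ⟨p + 1, hp⟩ ⟨q + 1, hq⟩ ∈ R := by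
      intro p q hp hq hb
      apply (hself _).mp
      intro z hz
      have k := key1 p q hp hq z hz
      have e : τ (B ⟨p + 1, hp⟩ ⟨q + 1, hq⟩ * z)
          = τ ((B ⟨p, by omega⟩ ⟨q, by omega⟩ : D) * z)
            - τ (z * B ⟨p, by omega⟩ ⟨q, by omega⟩ - B ⟨p + 1, hp⟩ ⟨q + 1, hq⟩ * z) := by
        rw [map_sub, hτ z]
        ring
      rw [e]
      exact O.sub_mem (memO _ hb z hz) k
    -- from c ∈ R deduce b ∈ R (moving down the antidiagonal)
    have stepdown : ∀ (p q : ℕ) (hp : p + 1 < m) (hq : q + 1 < m),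
        B ⟨p + 1, hp⟩ ⟨q + 1, hq⟩ ∈ R → B ⟨p, by omega⟩ ⟨q, by omega⟩ ∈ R := by
      intro p q hp hq hc
      apply (hself _).mp
      intro z hz
      have k := key1 p q hp hq z hz
      have e : τ ((B ⟨p, by omega⟩ ⟨q, by omega⟩ : D) * z)
          = τ (z * B ⟨p, by omega⟩ ⟨q, by omega⟩ - B ⟨p + 1, hp⟩ ⟨q + 1, hq⟩ * z)
            + τ (B ⟨p + 1, hp⟩ ⟨q + 1, hq⟩ * z) := by
        rw [map_sub, hτ z]
        ring
      rw [e]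
      exact O.add_mem k (memO _ hc z hz)
    -- entries below the diagonal
    have lower : ∀ (q p : ℕ) (hqp : q < p) (hp : p < m), B ⟨p, hp⟩ ⟨q, by omega⟩ ∈ R := by
      intro q
      induction q with
      | zero =>
        intro p hqp hp
        obtain ⟨p', rfl⟩ : ∃ p', p = p' + 1 := ⟨p - 1, by omega⟩
        apply (hself _).mp
        intro z hz
        exact key0 p' hp z hz
      | succ q ih =>
        intro p hqp hp
        obtain ⟨p', rfl⟩ : ∃ p', p = p' + 1 := ⟨p - 1, by omega⟩
        exact stepup p' q hp (by omega) (ih p' (by omega) (by omega))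
    -- entries on or above the diagonal
    have upper : ∀ (k p q : ℕ) (hpq : p ≤ q) (hq : q < m), m - 1 - q = k →
        B ⟨p, by omega⟩ ⟨q, hq⟩ ∈ R := by
      intro k
      induction k with
      | zero =>
        intro p q hpq hq hk
        have hq' : q = m - 1 := by omega
        subst hq'
        have h0 : B ⟨p, by omega⟩ ⟨m - 1, hq⟩ = 0 := hB _
        rw [h0]
        exact zero_mem R
      | succ k ih =>
        intro p q hpq hq hk
        have hq1 : q + 1 < m := by omega
        have hp1 : p + 1 < m := by omega
        exact stepdown p q hp1 hq1 (ih (p + 1) (q + 1) (by omega) hq1 (by omega))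
    intro i j
    rcases lt_or_ge (j : ℕ) (i : ℕ) with hlt | hle
    · exact lower j i hlt i.isLt
    · exact upper (m - 1 - j) i j hle j.isLt rfl
  · intro hBR A hAc hAR
    have hRO : ∀ x ∈ R, τ x ∈ O := by
      intro x hx
      simpa using memO x hx 1 (one_mem R)
    apply hRO
    apply sum_mem
    intro i _
    rw [Matrix.mul_apply]
    apply sum_mem
    intro k _
    apply mul_mem
    · rw [hY]
      split
      · exact one_mem R
      · exact zero_mem R
    · rw [Matrix.sub_apply]
      apply sub_mem
      · rw [Matrix.mul_apply]
        exact sum_mem fun j _ => mul_mem (hAR k j) (hBR j i)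
      · rw [Matrix.mul_apply]
        exact sum_mem fun j _ => mul_mem (hBR k j) (hAR j i)
end
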